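/- Let Z ⊆ ℝ² be a closed set with the following property: for every (x,y) ∈ Z there exists ε > 0 such that the bow-tie set ([x−ε,x]×[y−ε,y]) ∪ ([x,x+ε]×[y,y+ε]) intersects Z only at (x,y). Then Z is nowhere dense in ℝ². -/
import Mathlib


open Set

/-- If `Z ⊆ ℝ²` is closed and every point `(x,y) ∈ Z` has a bow-tie neighbourhood
`([x−ε,x]×[y−ε,y]) ∪ ([x,x+ε]×[y,y+ε])` meeting `Z` only at `(x,y)`, then `Z` is
nowhere dense. -/
theorem stmt5 (Z : Set (ℝ × ℝ)) (hZ : IsClosed Z)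
    (hbow : ∀ p ∈ Z, ∃ ε > (0 : ℝ),
      ((Icc (p.1 - ε) p.1 ×ˢ Icc (p.2 - ε) p.2) ∪
        (Icc p.1 (p.1 + ε) ×ˢ Icc p.2 (p.2 + ε))) ∩ Z = {p}) :
    IsNowhereDense Z := by
  rw [hZ.isNowhereDense_iff]
  rw [eq_empty_iff_forall_notMem]
  intro p hp
  have hpZ : p ∈ Z := interior_subset hp
  obtain ⟨ε, hε, hmeet⟩ := hbow p hpZ
  obtain ⟨δ, hδ, hball⟩ := Metric.mem_nhds_iff.mp (mem_interior_iff_mem_nhds.mp hp)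
  set t : ℝ := min ε δ / 2 with ht
  have ht0 : 0 < t := by positivity
  have htε : t ≤ ε := by
    have : min ε δ ≤ ε := min_le_left _ _
    linarith
  have htδ : t < δ := by
    have : min ε δ ≤ δ := min_le_right _ _
    linarith
  set q : ℝ × ℝ := (p.1 + t, p.2 + t) with hq
  have hqZ : q ∈ Z := by
    apply hball
    simp only [Metric.mem_ball, Prod.dist_eq, hq, Real.dist_eq]
    simp only [add_sub_cancel_left, abs_of_pos ht0]
    simpa using htδ
  have hqmem : q ∈ ((Icc (p.1 - ε) p.1 ×ˢ Icc (p.2 - ε) p.2) ∪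
        (Icc p.1 (p.1 + ε) ×ˢ Icc p.2 (p.2 + ε))) ∩ Z := by
    refine ⟨Or.inr ⟨⟨?_, ?_⟩, ?_, ?_⟩, hqZ⟩ <;> simp [hq] <;> linarith
  rw [hmeet] at hqmem
  have : p.1 + t = p.1 := congrArg Prod.fst hqmem
  linarith
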